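/- For every (m,n) ∈ ℝ³ × ℝ³, the strains (u,v) = F(m,n) satisfy Q(u,v) < 1 and G(u,v) = (m,n); that is, the backward constitutive map G inverts the forward constitutive map F. -/

import Mathlib

/-- The quadratic form `Q(u,v)`. -/
def Q (α β ζ η ι : ℝ) (u v : Fin 3 → ℝ) : ℝ :=
  α ^ 2 * (u 0 ^ 2 + u 1 ^ 2) + β ^ 2 * u 2 ^ 2 + ζ ^ 2 * (v 0 ^ 2 + v 1 ^ 2)
    + η ^ 2 * (v 2 - 1) ^ 2 + 2 * ι * u 2 * (v 2 - 1)

/-- The complementary quadratic form `Q*(m,n)`. -/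
noncomputable def Qstar (α β ζ η ι : ℝ) (m n : Fin 3 → ℝ) : ℝ :=
  (m 0 ^ 2 + m 1 ^ 2) / α ^ 2 + (n 0 ^ 2 + n 1 ^ 2) / ζ ^ 2
    + (η ^ 2 * m 2 ^ 2 + β ^ 2 * n 2 ^ 2 - 2 * ι * m 2 * n 2) / (β ^ 2 * η ^ 2 - ι ^ 2)

/-- The forward constitutive map `F : (m,n) ↦ (u,v)`, with
`λ = (γ^p + Q*(m,n)^{p/2})^{−1/p}`. -/
noncomputable def Fmap (p α β γ ζ η ι : ℝ) (m n : Fin 3 → ℝ) :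
    (Fin 3 → ℝ) × (Fin 3 → ℝ) :=
  let lam : ℝ := (γ ^ p + (Qstar α β ζ η ι m n) ^ (p / 2)) ^ (-(1 / p))
  (![lam * m 0 / α ^ 2, lam * m 1 / α ^ 2,
      lam * (η ^ 2 * m 2 - ι * n 2) / (β ^ 2 * η ^ 2 - ι ^ 2)],
   ![lam * n 0 / ζ ^ 2, lam * n 1 / ζ ^ 2,
      1 + lam * (β ^ 2 * n 2 - ι * m 2) / (β ^ 2 * η ^ 2 - ι ^ 2)])

/-- The backward constitutive map `G : (u,v) ↦ (m,n)`, with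
`μ = γ(1 − Q(u,v)^{p/2})^{−1/p}`. -/
noncomputable def Gmap (p α β γ ζ η ι : ℝ) (u v : Fin 3 → ℝ) :
    (Fin 3 → ℝ) × (Fin 3 → ℝ) :=
  let mu : ℝ := γ * (1 - (Q α β ζ η ι u v) ^ (p / 2)) ^ (-(1 / p))
  (![mu * α ^ 2 * u 0, mu * α ^ 2 * u 1, mu * (β ^ 2 * u 2 + ι * (v 2 - 1))],
   ![mu * ζ ^ 2 * v 0, mu * ζ ^ 2 * v 1, mu * (ι * u 2 + η ^ 2 * (v 2 - 1))])

set_option maxHeartbeats 1000000 in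
/-- for every `(m,n)`, the strains `(u,v) = F(m,n)` satisfy `Q(u,v) < 1`
and `G(u,v) = (m,n)`: `G` inverts `F`. -/
theorem Gmap_comp_Fmap (p α β γ ζ η ι : ℝ) (hp : 0 < p) (hα : 0 < α) (hβ : 0 < β)
    (hγ : 0 < γ) (hζ : 0 < ζ) (hη : 0 < η) (hβηι : 0 < β ^ 2 * η ^ 2 - ι ^ 2) :
    ∀ m n : Fin 3 → ℝ,
      Q α β ζ η ι (Fmap p α β γ ζ η ι m n).1 (Fmap p α β γ ζ η ι m n).2 < 1 ∧
      Gmap p α β γ ζ η ι (Fmap p α β γ ζ η ι m n).1 (Fmap p α β γ ζ η ι m n).2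
        = (m, n) := by
  intro m n
  have hDne : β ^ 2 * η ^ 2 - ι ^ 2 ≠ 0 := ne_of_gt hβηι
  have hαne : α ≠ 0 := hα.ne'
  have hζne : ζ ≠ 0 := hζ.ne'
  -- S = Qstar is nonnegative
  have hS : 0 ≤ Qstar α β ζ η ι m n := by
    have hnum : 0 ≤ η ^ 2 * m 2 ^ 2 + β ^ 2 * n 2 ^ 2 - 2 * ι * m 2 * n 2 := by
      nlinarith [sq_nonneg (η ^ 2 * m 2 - ι * n 2), mul_nonneg hβηι.le (sq_nonneg (n 2)),
        sq_nonneg η, pow_pos hη 2]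
    unfold Qstar
    have h1 : 0 ≤ (m 0 ^ 2 + m 1 ^ 2) / α ^ 2 := by positivity
    have h2 : 0 ≤ (n 0 ^ 2 + n 1 ^ 2) / ζ ^ 2 := by positivity
    have h3 : 0 ≤ (η ^ 2 * m 2 ^ 2 + β ^ 2 * n 2 ^ 2 - 2 * ι * m 2 * n 2)
        / (β ^ 2 * η ^ 2 - ι ^ 2) := div_nonneg hnum hβηι.le
    linarith
  set S := Qstar α β ζ η ι m n with hSdef
  have hs : (0:ℝ) ≤ S ^ (p / 2) := Real.rpow_nonneg hS _
  have hγp : (0:ℝ) < γ ^ p := Real.rpow_pos_of_pos hγ p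
  have hL : (0:ℝ) < γ ^ p + S ^ (p / 2) := by linarith
  set L := γ ^ p + S ^ (p / 2) with hLdef
  set lam := L ^ (-(1 / p)) with hlamdef
  have hlam : 0 < lam := Real.rpow_pos_of_pos hL _
  -- Q(F(m,n)) = lam^2 * S
  have hQu : Q α β ζ η ι (Fmap p α β γ ζ η ι m n).1 (Fmap p α β γ ζ η ι m n).2
      = lam ^ 2 * S := by
    show Q α β ζ η ι
      ![lam * m 0 / α ^ 2, lam * m 1 / α ^ 2,
        lam * (η ^ 2 * m 2 - ι * n 2) / (β ^ 2 * η ^ 2 - ι ^ 2)]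
      ![lam * n 0 / ζ ^ 2, lam * n 1 / ζ ^ 2,
        1 + lam * (β ^ 2 * n 2 - ι * m 2) / (β ^ 2 * η ^ 2 - ι ^ 2)] = lam ^ 2 * S
    rw [hSdef]
    simp only [Q, Qstar, Matrix.cons_val_zero, Matrix.cons_val_one, Matrix.head_cons,
      Matrix.cons_val_two, Matrix.tail_cons]
    field_simp
    ring
  -- lam^2 = L^(-(2/p))
  have hlam2 : lam ^ 2 = L ^ (-(2 / p)) := by
    rw [hlamdef, ← Real.rpow_natCast (L ^ (-(1 / p))) 2, ← Real.rpow_mul hL.le]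
    norm_num
    ring_nf
  -- Q < 1
  have hQlt : lam ^ 2 * S < 1 := by
    have hE : p / 2 * (2 / p) = 1 := by field_simp
    have h1 : S = (S ^ (p / 2)) ^ (2 / p) := by
      rw [← Real.rpow_mul hS, hE, Real.rpow_one]
    have h2 : S ^ (p / 2) < L := by rw [hLdef]; linarith
    have h3 : S < L ^ (2 / p) := by
      calc S = (S ^ (p / 2)) ^ (2 / p) := h1
        _ < L ^ (2 / p) := Real.rpow_lt_rpow hs h2 (by positivity)
    calc lam ^ 2 * S < lam ^ 2 * L ^ (2 / p) :=
          mul_lt_mul_of_pos_left h3 (pow_pos hlam 2)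
      _ = 1 := by
          rw [hlam2, ← Real.rpow_add hL]
          norm_num
  refine ⟨by rw [hQu]; exact hQlt, ?_⟩
  -- compute mu * lam = 1
  have hQpow : (lam ^ 2 * S) ^ (p / 2) = S ^ (p / 2) / L := by
    rw [Real.mul_rpow (by positivity) hS, hlam2, ← Real.rpow_mul hL.le]
    rw [show -(2 / p) * (p / 2) = -1 by field_simp]
    rw [Real.rpow_neg_one]
    ring
  have h1Q : 1 - (lam ^ 2 * S) ^ (p / 2) = γ ^ p / L := by
    rw [hQpow, hLdef]
    field_simp
    ring
  have hmu : γ * (1 - (lam ^ 2 * S) ^ (p / 2)) ^ (-(1 / p)) = L ^ (1 / p) := by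
    rw [h1Q, Real.div_rpow hγp.le hL.le, ← Real.rpow_mul hγ.le]
    rw [show p * -(1 / p) = -1 by field_simp]
    rw [Real.rpow_neg_one, Real.rpow_neg hL.le]
    have : L ^ (1 / p) ≠ 0 := (Real.rpow_pos_of_pos hL _).ne'
    field_simp
  have hml : γ * (1 - (lam ^ 2 * S) ^ (p / 2)) ^ (-(1 / p)) * lam = 1 := by
    rw [hmu, hlamdef, ← Real.rpow_add hL]
    norm_num
  set mu := γ * (1 - (lam ^ 2 * S) ^ (p / 2)) ^ (-(1 / p)) with hmudef
  have hmu1 : mu = lam⁻¹ := eq_inv_of_mul_eq_one_left hml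
  have hF1 : (Fmap p α β γ ζ η ι m n).1
      = ![lam * m 0 / α ^ 2, lam * m 1 / α ^ 2,
          lam * (η ^ 2 * m 2 - ι * n 2) / (β ^ 2 * η ^ 2 - ι ^ 2)] := rfl
  have hF2 : (Fmap p α β γ ζ η ι m n).2
      = ![lam * n 0 / ζ ^ 2, lam * n 1 / ζ ^ 2,
          1 + lam * (β ^ 2 * n 2 - ι * m 2) / (β ^ 2 * η ^ 2 - ι ^ 2)] := rfl
  have hDne' : -ι ^ 2 + η ^ 2 * β ^ 2 ≠ 0 := by intro h; linarith
  simp only [Gmap]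
  rw [hQu, ← hmudef, hmu1, hF1, hF2]
  refine Prod.ext ?_ ?_ <;> funext i <;> fin_cases i <;>
    simp only [Matrix.cons_val_zero, Matrix.cons_val_one, Matrix.head_cons,
      Matrix.cons_val_two, Matrix.tail_cons, Fin.reduceFinMk, Fin.isValue] <;>
    (field_simp; try ring) <;> field_simp
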